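/- Let m ≥ 2, k ≥ m-1, h > 0, r > 0, s = ±1, and define b_k ∈ ℝ^m by x_i = (-1)^(i-1) · (C(m+k-i, m-i+1) - 2) · h^(m-i+1) · r · s and b_{k-1} by x_i = (-1)^(i-1) · (C(m+k-i-1, m-i+1) - 2) · h^(m-i+1) · r · s. Then both points satisfy Σ_{i=0}^{m-1} C(k, i) · h^i · x_{i+1} = (-1)^(m-1) · (C(k, m) - 2·C(k-1, m-1)) · h^m · r · s. -/

import Mathlib

open PowerSeries Finset

lemma coeff_one_sub_pow (k : ℕ) : ∀ n : ℕ,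
    (PowerSeries.coeff (R := ℤ) n) ((1 - PowerSeries.X) ^ k) = (-1) ^ n * k.choose n := by
  induction k with
  | zero =>
    intro n
    simp [coeff_one]
    rcases n with _ | n <;> simp
  | succ k ih =>
    intro n
    have : (1 - PowerSeries.X : ℤ⟦X⟧) ^ (k+1) = (1 - PowerSeries.X)^k - (1 - PowerSeries.X)^k * PowerSeries.X := by
      ring
    rw [this, map_sub, ih]
    rcases n with _ | n
    · simp [PowerSeries.coeff_zero_eq_constantCoeff]
    · rw [PowerSeries.coeff_succ_mul_X, ih, Nat.choose_succ_succ]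
      push_cast
      ring

lemma key (k d m : ℕ) (hd : 1 ≤ d) (hdk : d ≤ k) :
    ∑ i ∈ Finset.range (m+1), (-1:ℤ)^i * k.choose i * ((d-1+(m-i)).choose (d-1)) =
      (-1)^m * (k-d).choose m := by
  have h1 : ((1 - PowerSeries.X)^k * (invOneSubPow ℤ d).val : ℤ⟦X⟧) = (1 - PowerSeries.X)^(k-d) := by
    have h2 : (1 - PowerSeries.X : ℤ⟦X⟧)^k = (1 - PowerSeries.X)^(k-d) * (1 - PowerSeries.X)^d := by
      rw [← pow_add]; congr 1; omega
    have h4 : ((1 - PowerSeries.X)^d * (invOneSubPow ℤ d).val : ℤ⟦X⟧) = 1 := by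
      rw [← invOneSubPow_inv_eq_one_sub_pow]; exact Units.inv_mul _
    rw [h2, mul_assoc, h4, mul_one]
  have h3 := congrArg (PowerSeries.coeff (R := ℤ) m) h1
  rw [PowerSeries.coeff_mul, Finset.Nat.sum_antidiagonal_eq_sum_range_succ_mk,
    coeff_one_sub_pow] at h3
  rw [invOneSubPow_val_eq_mk_sub_one_add_choose_of_pos ℤ d hd] at h3
  simp only [PowerSeries.coeff_mk, coeff_one_sub_pow] at h3
  exact h3

lemma int3 (k m : ℕ) (hk : 1 ≤ k) (hm : 1 ≤ m) :
    ∑ i ∈ Finset.range m, (-1:ℤ)^i * k.choose i = (-1)^(m-1) * (k-1).choose (m-1) := by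
  have H := key k 1 (m-1) le_rfl hk
  rw [show m-1+1 = m by omega] at H
  simpa using H

lemma neg_pow_pred (m : ℕ) (hm : 1 ≤ m) : (-1:ℤ)^m = -(-1:ℤ)^(m-1) := by
  conv_lhs => rw [show m = m-1+1 by omega]
  rw [pow_succ]
  ring

lemma int1 (k m : ℕ) (hk : 1 ≤ k) (hm : 1 ≤ m) :
    ∑ i ∈ Finset.range m, (-1:ℤ)^i * k.choose i * ((m+k-1-i).choose (m-i)) =
      (-1)^(m-1) * k.choose m := by
  have H := key k k m hk le_rfl
  rw [Finset.sum_range_succ] at H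
  have h0 : ((k-k).choose m : ℤ) = 0 := by
    rw [Nat.sub_self, Nat.choose_eq_zero_of_lt (by omega)]; simp
  have hlast : ((k-1+(m-m)).choose (k-1) : ℤ) = 1 := by simp
  rw [hlast, h0, mul_zero, mul_one] at H
  have hc : ∀ i ∈ Finset.range m, (-1:ℤ)^i * k.choose i * ((m+k-1-i).choose (m-i)) =
      (-1:ℤ)^i * k.choose i * ((k-1+(m-i)).choose (k-1)) := by
    intro i hi
    simp only [Finset.mem_range] at hi
    have h5 := Nat.choose_symm (Nat.le_add_right (k-1) (m-i))
    rw [Nat.add_sub_cancel_left] at h5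
    rw [show m+k-1-i = k-1+(m-i) by omega, h5]
  rw [neg_pow_pred m hm] at H
  rw [Finset.sum_congr rfl hc]
  linarith

lemma int2 (k m : ℕ) (hk : 2 ≤ k) (hm : 2 ≤ m) :
    ∑ i ∈ Finset.range m, (-1:ℤ)^i * k.choose i * ((m+k-2-i).choose (m-i)) =
      (-1)^(m-1) * k.choose m := by
  have H := key k (k-1) m (by omega) (by omega)
  rw [Finset.sum_range_succ] at H
  have h0 : ((k-(k-1)).choose m : ℤ) = 0 := by
    rw [show k-(k-1) = 1 by omega, Nat.choose_eq_zero_of_lt (by omega)]; simp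
  have hlast : ((k-1-1+(m-m)).choose (k-1-1) : ℤ) = 1 := by simp
  rw [hlast, h0, mul_zero, mul_one] at H
  have hc : ∀ i ∈ Finset.range m, (-1:ℤ)^i * k.choose i * ((m+k-2-i).choose (m-i)) =
      (-1:ℤ)^i * k.choose i * ((k-1-1+(m-i)).choose (k-1-1)) := by
    intro i hi
    simp only [Finset.mem_range] at hi
    have h5 := Nat.choose_symm (Nat.le_add_right (k-1-1) (m-i))
    rw [Nat.add_sub_cancel_left] at h5
    rw [show m+k-2-i = k-1-1+(m-i) by omega, h5]
  rw [neg_pow_pred m (by omega)] at H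
  rw [Finset.sum_congr rfl hc]
  linarith

theorem stmt_15 (m k : ℕ) (hm : 2 ≤ m) (hk : m - 1 ≤ k) (h r s : ℝ)
    (hh : 0 < h) (hr : 0 < r) (hs : s = 1 ∨ s = -1)
    (b b' : ℕ → ℝ)
    (hb : ∀ i : ℕ, 1 ≤ i → i ≤ m →
      b i = (-1 : ℝ) ^ (i - 1) * (((m + k - i).choose (m - i + 1) : ℝ) - 2) *
        h ^ (m - i + 1) * r * s)
    (hb' : ∀ i : ℕ, 1 ≤ i → i ≤ m →
      b' i = (-1 : ℝ) ^ (i - 1) * (((m + k - i - 1).choose (m - i + 1) : ℝ) - 2) *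
        h ^ (m - i + 1) * r * s) :
    ∑ i ∈ Finset.range m, (k.choose i : ℝ) * h ^ i * b (i + 1) =
        (-1 : ℝ) ^ (m - 1) * ((k.choose m : ℝ) - 2 * ((k - 1).choose (m - 1) : ℝ)) *
          h ^ m * r * s ∧
    ∑ i ∈ Finset.range m, (k.choose i : ℝ) * h ^ i * b' (i + 1) =
        (-1 : ℝ) ^ (m - 1) * ((k.choose m : ℝ) - 2 * ((k - 1).choose (m - 1) : ℝ)) *
          h ^ m * r * s := by
  have hk1 : 1 ≤ k := by omega
  have hm1 : 1 ≤ m := by omega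
  constructor
  · have HS : ∀ i ∈ Finset.range m, (k.choose i : ℝ) * h ^ i * b (i + 1) =
        ((((-1:ℤ)^i * k.choose i * ((m+k-1-i).choose (m-i)) - 2 * ((-1:ℤ)^i * k.choose i)) : ℤ) : ℝ)
          * (h ^ m * r * s) := by
      intro i hi
      simp only [Finset.mem_range] at hi
      rw [hb (i+1) (by omega) (by omega),
        show m + k - (i+1) = m + k - 1 - i by omega,
        show m - (i+1) + 1 = m - i by omega,
        show (i+1) - 1 = i from rfl,
        show (h:ℝ) ^ m = h ^ i * h ^ (m-i) by rw [← pow_add]; congr 1; omega]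
      push_cast
      ring
    rw [Finset.sum_congr rfl HS, ← Finset.sum_mul, ← Int.cast_sum,
      Finset.sum_sub_distrib, int1 k m hk1 hm1, ← Finset.mul_sum, int3 k m hk1 hm1]
    push_cast
    ring
  · rcases Nat.lt_or_ge k 2 with hk2 | hk2
    · -- k = 1, hence m = 2
      have hkk : k = 1 := by omega
      have hmm : m = 2 := by omega
      subst hkk hmm
      rw [Finset.sum_range_succ, Finset.sum_range_succ, Finset.sum_range_zero,
        hb' 1 (by norm_num) (by norm_num), hb' 2 (by norm_num) (by norm_num)]
      norm_num [Nat.choose]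
      ring
    · have HS : ∀ i ∈ Finset.range m, (k.choose i : ℝ) * h ^ i * b' (i + 1) =
          ((((-1:ℤ)^i * k.choose i * ((m+k-2-i).choose (m-i)) - 2 * ((-1:ℤ)^i * k.choose i)) : ℤ) : ℝ)
            * (h ^ m * r * s) := by
        intro i hi
        simp only [Finset.mem_range] at hi
        rw [hb' (i+1) (by omega) (by omega),
          show m + k - (i+1) - 1 = m + k - 2 - i by omega,
          show m - (i+1) + 1 = m - i by omega,
          show (i+1) - 1 = i from rfl,
          show (h:ℝ) ^ m = h ^ i * h ^ (m-i) by rw [← pow_add]; congr 1; omega]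
        push_cast
        ring
      rw [Finset.sum_congr rfl HS, ← Finset.sum_mul, ← Int.cast_sum,
        Finset.sum_sub_distrib, int2 k m hk2 hm, ← Finset.mul_sum, int3 k m hk1 hm1]
      push_cast
      ring
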